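/- Let n ≥ 2, let V be a real vector space of dimension 2n, let ω be a nondegenerate alternating 2-form on V, let v ∈ V be nonzero, let β be a linear form on V with β(v) = 1, and set W := {w ∈ V : ω(v, w) = 0}. Then for all w₁, …, w_{2n−2} ∈ W: (β ∧ ω^{∧(n−1)})(v, w₁, …, w_{2n−2}) = ω^{∧(n−1)}(w₁, …, w_{2n−2}). -/

import Mathlib

open scoped BigOperators

/-- The `k`-fold wedge power of an alternating `2`-form `ω`, as a function of `2k` vectors.
This is the full antisymmetrized sum over all permutations, which equals `2^k·k!` times the
shuffle-sum wedge power; the identity below is invariant under this positive rescaling. -/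
noncomputable def wedgePowTwoForm {V : Type*} [AddCommGroup V] [Module ℝ V]
    (ω : V [⋀^Fin 2]→ₗ[ℝ] ℝ) (k : ℕ) (z : Fin (2 * k) → V) : ℝ :=
  ∑ σ : Equiv.Perm (Fin (2 * k)), ((Equiv.Perm.sign σ : ℤ) : ℝ) *
    ∏ i : Fin k,
      ω ![z (σ ⟨2 * (i : ℕ), by have := i.isLt; omega⟩),
          z (σ ⟨2 * (i : ℕ) + 1, by have := i.isLt; omega⟩)]

/-- The wedge product of a linear form `β` with a `k`-form `ρ` (given as a function of
`k`-tuples): `(β ∧ ρ)(v₀, …, v_k) = Σ_i (−1)^i β(v_i) ρ(v₀, …, v̂_i, …, v_k)`. -/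
noncomputable def wedgeOneFun {V : Type*} [AddCommGroup V] [Module ℝ V] {k : ℕ}
    (β : V →ₗ[ℝ] ℝ) (ρ : (Fin k → V) → ℝ) (z : Fin (k + 1) → V) : ℝ :=
  ∑ i : Fin (k + 1), (-1 : ℝ) ^ (i : ℕ) * β (z i) * ρ (i.removeNth z)

lemma omega_swap {V : Type*} [AddCommGroup V] [Module ℝ V]
    (ω : V [⋀^Fin 2]→ₗ[ℝ] ℝ) (a b : V) : ω ![a, b] = - ω ![b, a] := by
  have h := ω.map_swap ![b, a] (show (0 : Fin 2) ≠ 1 by decide)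
  have : (![b, a] ∘ Equiv.swap (0 : Fin 2) 1) = ![a, b] := by
    funext i; fin_cases i <;> simp [Equiv.swap_apply_left, Equiv.swap_apply_right]
  rw [this] at h
  linarith

lemma wedgePow_eq_zero {V : Type*} [AddCommGroup V] [Module ℝ V]
    (ω : V [⋀^Fin 2]→ₗ[ℝ] ℝ) (k : ℕ) (v : V) (z : Fin (2 * k) → V)
    (j₀ : Fin (2 * k)) (hj : z j₀ = v) (h : ∀ i, ω ![v, z i] = 0) :
    wedgePowTwoForm ω k z = 0 := by
  unfold wedgePowTwoForm
  apply Finset.sum_eq_zero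
  intro σ _
  have hk : ((σ⁻¹ j₀ : Fin (2 * k)) : ℕ) / 2 < k := by
    have := (σ⁻¹ j₀).isLt; omega
  set t : Fin (2 * k) := σ⁻¹ j₀ with ht
  have hσt : σ t = j₀ := Equiv.apply_symm_apply σ j₀
  set i : Fin k := ⟨(t : ℕ) / 2, hk⟩ with hi
  rcases Nat.lt_or_ge ((t : ℕ) % 2) 1 with hm | hm
  · have he : (⟨2 * (i : ℕ), by have := i.isLt; omega⟩ : Fin (2 * k)) = t := by
      apply Fin.ext; simp only [hi]; omega
    rw [mul_eq_zero]; right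
    apply Finset.prod_eq_zero (Finset.mem_univ i)
    rw [he, hσt, hj]
    exact h _
  · have he : (⟨2 * (i : ℕ) + 1, by have := i.isLt; omega⟩ : Fin (2 * k)) = t := by
      apply Fin.ext; simp only [hi]; omega
    rw [mul_eq_zero]; right
    apply Finset.prod_eq_zero (Finset.mem_univ i)
    rw [he, hσt, hj, omega_swap, h, neg_zero]

/-- Let `n ≥ 2` (here `n = m + 2`), let `V` be a real vector space of
dimension `2n`, let `ω` be a nondegenerate alternating `2`-form on `V`, let `v ∈ V` be nonzero,
let `β` be a linear form with `β(v) = 1`, and set `W := {w : ω(v, w) = 0}`.  Then for all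
`w₁, …, w_{2n−2} ∈ W`:
`(β ∧ ω^{∧(n−1)})(v, w₁, …, w_{2n−2}) = ω^{∧(n−1)}(w₁, …, w_{2n−2})`. -/
theorem liouville_contraction_identity (m : ℕ) (V : Type*)
    [AddCommGroup V] [Module ℝ V]
    (hdim : Module.finrank ℝ V = 2 * (m + 2))
    (ω : V [⋀^Fin 2]→ₗ[ℝ] ℝ)
    (hnd : ∀ x : V, x ≠ 0 → ∃ y : V, ω ![x, y] ≠ 0)
    (v : V) (hv : v ≠ 0)
    (β : V →ₗ[ℝ] ℝ) (hβ : β v = 1)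
    (w : Fin (2 * (m + 1)) → V)
    (hw : ∀ i, ω ![v, w i] = 0) :
    wedgeOneFun β (wedgePowTwoForm ω (m + 1)) (Fin.cons v w)
      = wedgePowTwoForm ω (m + 1) w := by
  have hvv : ω ![v, v] = 0 := ω.map_eq_zero_of_eq ![v, v] (i := 0) (j := 1) rfl (by decide)
  unfold wedgeOneFun
  rw [Fin.sum_univ_succ]
  have h0 : ∀ j : Fin (2 * (m + 1)),
      wedgePowTwoForm ω (m + 1)
        ((j.succ).removeNth (Fin.cons v w : Fin (2 * (m + 1) + 1) → V)) = 0 := by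
    intro j
    apply wedgePow_eq_zero ω (m + 1) v _ (⟨0, by omega⟩ : Fin (2 * (m + 1)))
    · simp [Fin.removeNth, Fin.succAbove]
    · intro i
      rcases Fin.eq_zero_or_eq_succ ((j.succ).succAbove i) with h | ⟨j', hj'⟩
      · simp [Fin.removeNth, h, hvv]
      · simp [Fin.removeNth, hj', hw]
  simp only [h0, mul_zero, Finset.sum_const_zero, add_zero]
  simp [Fin.removeNth_zero, hβ]
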